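/- Let q ≥ 1 be an integer, χ a Dirichlet character modulo q, and a an integer. Then Σ_{h=1}^{q} conj(χ)(h) · e_q(a h²) = Σ_{ξ} τ_a(ξ), where the sum on the right-hand side runs over all Dirichlet characters ξ modulo q satisfying ξ² = conj(χ). -/

import Mathlib

open scoped Classical

section Aux

/-- Sum of a Dirichlet character over the units of `ZMod q`. -/
private lemma aux_sum_units_eq (q : ℕ) [NeZero q] (η : DirichletCharacter ℂ q) :
    ∑ u : (ZMod q)ˣ, η (u : ZMod q) = if η = 1 then (q.totient : ℂ) else 0 := by
  have h1 : ∑ x : ZMod q, η x = ∑ u : (ZMod q)ˣ, η (u : ZMod q) := by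
    have h2 := Finset.sum_map Finset.univ ⟨(Units.val : (ZMod q)ˣ → ZMod q), Units.val_injective⟩
      (fun x => η x)
    simp only [Function.Embedding.coeFn_mk] at h2
    rw [← h2]
    refine (Finset.sum_subset (Finset.subset_univ _) ?_).symm
    intro x _ hx
    refine η.map_nonunit fun hu => hx ?_
    simp only [Finset.mem_map, Finset.mem_univ, Function.Embedding.coeFn_mk, true_and]
    exact ⟨hu.unit, rfl⟩
  rw [← h1]
  split_ifs with h
  · subst h
    rw [MulChar.sum_one_eq_card_units, ZMod.card_units_eq_totient]
  · exact MulChar.sum_eq_zero_of_ne_one h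

/-- The key character-theoretic identity:
`∑_{y² = m} ψ(y) = ∑_{ξ² = ψ} ξ(m)`. -/
private lemma aux_key (q : ℕ) [NeZero q] (ψ : DirichletCharacter ℂ q) (m : ZMod q) :
    ∑ y ∈ Finset.univ.filter (fun y : ZMod q => y ^ 2 = m), ψ y
      = ∑ ξ ∈ Finset.univ.filter (fun ξ : DirichletCharacter ℂ q => ξ ^ 2 = ψ), ξ m := by
  haveI : NeZero (Monoid.exponent (ZMod q)ˣ) := ⟨Monoid.exponent_ne_zero_of_finite⟩
  have hN : (q.totient : ℂ) ≠ 0 :=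
    Nat.cast_ne_zero.mpr (Nat.totient_pos.mpr (NeZero.pos q)).ne'
  have hL : ∑ y ∈ Finset.univ.filter (fun y : ZMod q => y ^ 2 = m), ψ y
      = ∑ u : (ZMod q)ˣ, if ((u : ZMod q)) ^ 2 = m then ψ (u : ZMod q) else 0 := by
    rw [Finset.sum_filter]
    have h2 := Finset.sum_map Finset.univ ⟨(Units.val : (ZMod q)ˣ → ZMod q), Units.val_injective⟩
      (fun x : ZMod q => if x ^ 2 = m then ψ x else 0)
    simp only [Function.Embedding.coeFn_mk] at h2
    rw [← h2]
    refine (Finset.sum_subset (Finset.subset_univ _) ?_).symm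
    intro x _ hx
    have hnu : ¬ IsUnit x := fun hu => hx (by
      simp only [Finset.mem_map, Finset.mem_univ, Function.Embedding.coeFn_mk, true_and]
      exact ⟨hu.unit, rfl⟩)
    simp [ψ.map_nonunit hnu]
  set D : ℂ := ∑ ξ : DirichletCharacter ℂ q, ∑ u : (ZMod q)ˣ,
      ξ (((u : ZMod q)) ^ 2 * m) * ψ ((u⁻¹ : (ZMod q)ˣ) : ZMod q) with hD
  have way1 : D
      = (q.totient : ℂ) * ∑ y ∈ Finset.univ.filter (fun y : ZMod q => y ^ 2 = m), ψ y := by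
    rw [hD, Finset.sum_comm, hL, Finset.mul_sum]
    refine Finset.sum_equiv (Equiv.inv (ZMod q)ˣ) (by simp) ?_
    intro u _
    rw [← Finset.sum_mul, DirichletCharacter.sum_characters_eq]
    have hcond : ((u : ZMod q)) ^ 2 * m = 1 ↔ ((((u⁻¹ : (ZMod q)ˣ) : ZMod q))) ^ 2 = m := by
      constructor
      · intro h
        have h3 : ((u⁻¹ : (ZMod q)ˣ) : ZMod q) ^ 2 * (((u : ZMod q)) ^ 2 * m)
            = ((u⁻¹ : (ZMod q)ˣ) : ZMod q) ^ 2 * 1 := by rw [h]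
        rw [← mul_assoc] at h3
        have h2 : ((u⁻¹ : (ZMod q)ˣ) : ZMod q) ^ 2 * ((u : ZMod q)) ^ 2 = 1 := by
          rw [← Units.val_pow_eq_pow_val, ← Units.val_pow_eq_pow_val, ← Units.val_mul,
            inv_pow, inv_mul_cancel, Units.val_one]
        rw [h2, one_mul, mul_one] at h3
        exact h3.symm
      · intro h
        rw [← h, ← Units.val_pow_eq_pow_val, ← Units.val_pow_eq_pow_val, ← Units.val_mul,
          inv_pow, mul_inv_cancel, Units.val_one]
    simp only [Equiv.inv_apply]
    by_cases h : ((u : ZMod q)) ^ 2 * m = 1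
    · rw [if_pos h, if_pos (hcond.mp h)]
    · rw [if_neg h, if_neg (fun hc => h (hcond.mpr hc)), zero_mul, mul_zero]
  have way2 : D = (q.totient : ℂ) *
      ∑ ξ ∈ Finset.univ.filter (fun ξ : DirichletCharacter ℂ q => ξ ^ 2 = ψ), ξ m := by
    rw [hD, Finset.mul_sum, Finset.sum_filter]
    refine Finset.sum_congr rfl ?_
    intro ξ _
    have hterm : ∀ u : (ZMod q)ˣ,
        ξ (((u : ZMod q)) ^ 2 * m) * ψ ((u⁻¹ : (ZMod q)ˣ) : ZMod q)
          = ξ m * ((ξ ^ 2 * ψ⁻¹) ((u : ZMod q))) := by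
      intro u
      rw [map_mul, map_pow, MulChar.mul_apply,
        MulChar.pow_apply' ξ (by norm_num : (2 : ℕ) ≠ 0), MulChar.inv_apply,
        Ring.inverse_unit]
      ring
    rw [Finset.sum_congr rfl (fun u _ => hterm u), ← Finset.mul_sum, aux_sum_units_eq]
    have hiff : ξ ^ 2 * ψ⁻¹ = 1 ↔ ξ ^ 2 = ψ := mul_inv_eq_one
    by_cases h : ξ ^ 2 = ψ
    · rw [if_pos (hiff.mpr h), if_pos h]; ring
    · rw [if_neg (fun hc => h (hiff.mp hc)), if_neg h]; simp
  exact mul_left_cancel₀ hN (way1.symm.trans way2)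

/-- The master identity over `ZMod q`, for an arbitrary function `e`. -/
private lemma aux_master (q : ℕ) [NeZero q] (ψ : DirichletCharacter ℂ q) (e : ZMod q → ℂ) :
    ∑ x : ZMod q, ψ x * e (x ^ 2)
      = ∑ ξ ∈ Finset.univ.filter (fun ξ : DirichletCharacter ℂ q => ξ ^ 2 = ψ),
          ∑ x : ZMod q, ξ x * e x := by
  rw [Finset.sum_comm]
  calc ∑ x : ZMod q, ψ x * e (x ^ 2)
      = ∑ x : ZMod q,
          ∑ y ∈ Finset.univ.filter (fun y : ZMod q => y ^ 2 = x), ψ y * e (y ^ 2) :=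
        (Finset.sum_fiberwise Finset.univ (fun y : ZMod q => y ^ 2)
          (fun y => ψ y * e (y ^ 2))).symm
    _ = ∑ x : ZMod q,
          ∑ ξ ∈ Finset.univ.filter (fun ξ : DirichletCharacter ℂ q => ξ ^ 2 = ψ),
            ξ x * e x := by
        refine Finset.sum_congr rfl fun x _ => ?_
        have h1 : ∑ y ∈ Finset.univ.filter (fun y : ZMod q => y ^ 2 = x), ψ y * e (y ^ 2)
            = (∑ y ∈ Finset.univ.filter (fun y : ZMod q => y ^ 2 = x), ψ y) * e x := by
          rw [Finset.sum_mul]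
          refine Finset.sum_congr rfl fun y hy => ?_
          rw [(Finset.mem_filter.mp hy).2]
        rw [h1, aux_key, Finset.sum_mul]

/-- Rewriting a sum over `Icc 1 q` as a sum over `ZMod q`. -/
private lemma aux_sum_Icc_eq_sum_zmod (q : ℕ) [NeZero q] (F : ZMod q → ℂ) :
    ∑ h ∈ Finset.Icc 1 q, F (h : ZMod q) = ∑ x : ZMod q, F x := by
  have hq : 1 ≤ q := NeZero.pos q
  refine Finset.sum_nbij' (fun h => (h : ZMod q))
    (fun x : ZMod q => if x.val = 0 then q else x.val) ?_ ?_ ?_ ?_ ?_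
  · intro a _; exact Finset.mem_univ _
  · intro x _
    simp only [Finset.mem_Icc]
    split_ifs with h
    · omega
    · exact ⟨by omega, (ZMod.val_lt x).le⟩
  · intro h hh
    simp only [Finset.mem_Icc] at hh
    have hv : ((h : ZMod q)).val = h % q := ZMod.val_natCast q h
    rcases eq_or_lt_of_le hh.2 with heq | hlt
    · subst heq; simp [hv]
    · have h2 : h % q = h := Nat.mod_eq_of_lt hlt
      rw [hv, h2, if_neg (by omega)]
  · intro x _
    split_ifs with h
    · rw [ZMod.natCast_self]
      exact ((ZMod.val_eq_zero x).mp h).symm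
    · exact ZMod.natCast_rightInverse x
  · intro a _; rfl

end Aux

/-- The Gauss sum `τ_a(ξ) = ∑_{h=1}^{q} ξ(h) e_q(ah)`. -/
noncomputable def gaussTau (q : ℕ) (ξ : DirichletCharacter ℂ q) (a : ℤ) : ℂ :=
  ∑ h ∈ Finset.Icc 1 q,
    ξ (h : ZMod q) * Complex.exp (2 * (Real.pi : ℂ) * Complex.I * ((a : ℂ) * (h : ℂ)) / (q : ℂ))

/-- For q ≥ 1, a Dirichlet character χ mod q and a ∈ ℤ,
`∑_{h=1}^{q} conj(χ)(h) e_q(a h²) = ∑_{ξ² = conj(χ)} τ_a(ξ)`,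
the sum being over all Dirichlet characters ξ mod q with ξ² = conj(χ). -/
theorem quadratic_char_sum_eq_sum_gauss (q : ℕ) (hq : 1 ≤ q)
    (χ : DirichletCharacter ℂ q) (a : ℤ) :
    (∑ h ∈ Finset.Icc 1 q,
        (starRingEnd ℂ) (χ (h : ZMod q)) *
          Complex.exp (2 * (Real.pi : ℂ) * Complex.I * ((a : ℂ) * (h : ℂ) ^ 2) / (q : ℂ)))
      = ∑ ξ ∈ Finset.univ.filter
          (fun ξ : DirichletCharacter ℂ q => ξ ^ 2 = χ.ringHomComp (starRingEnd ℂ)),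
          gaussTau q ξ a := by
  haveI : NeZero q := ⟨by omega⟩
  set ψ : DirichletCharacter ℂ q := χ.ringHomComp (starRingEnd ℂ) with hψ
  have hLHS : (∑ h ∈ Finset.Icc 1 q,
        (starRingEnd ℂ) (χ (h : ZMod q)) *
          Complex.exp (2 * (Real.pi : ℂ) * Complex.I * ((a : ℂ) * (h : ℂ) ^ 2) / (q : ℂ)))
      = ∑ x : ZMod q, ψ x * ZMod.stdAddChar ((a : ZMod q) * x ^ 2) := by
    rw [← aux_sum_Icc_eq_sum_zmod q (fun x => ψ x * ZMod.stdAddChar ((a : ZMod q) * x ^ 2))]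
    refine Finset.sum_congr rfl fun h _ => ?_
    have h1 : ψ ((h : ZMod q)) = (starRingEnd ℂ) (χ (h : ZMod q)) := rfl
    have h2 : ((a * (h : ℤ) ^ 2 : ℤ) : ZMod q) = (a : ZMod q) * ((h : ZMod q)) ^ 2 := by
      push_cast; ring
    rw [h1, ← h2, ZMod.stdAddChar_coe]
    push_cast
    ring_nf
  have hgauss : ∀ ξ : DirichletCharacter ℂ q,
      gaussTau q ξ a = ∑ x : ZMod q, ξ x * ZMod.stdAddChar ((a : ZMod q) * x) := by
    intro ξ
    rw [gaussTau, ← aux_sum_Icc_eq_sum_zmod q (fun x => ξ x * ZMod.stdAddChar ((a : ZMod q) * x))]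
    refine Finset.sum_congr rfl fun h _ => ?_
    have h2 : ((a * (h : ℤ) : ℤ) : ZMod q) = (a : ZMod q) * ((h : ZMod q)) := by
      push_cast; ring
    rw [← h2, ZMod.stdAddChar_coe]
    push_cast
    ring_nf
  rw [hLHS, aux_master q ψ (fun x => ZMod.stdAddChar ((a : ZMod q) * x))]
  refine Finset.sum_congr ?_ fun ξ _ => (hgauss ξ).symm
  ext ξ
  simp
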